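/- arXiv:1310.2963 — 5 statements merged into one kernel-verified Lean document; each statement's English description precedes it below -/
import Mathlib

section
/- (Theorem MaxMatching / MNT) Let V be a finite set of n trips and G a simple graph on V, and let M_max be a matching of G of maximum cardinality. Then the minimum, over all feasible trip sets P, of the number of parts of P equals n − |M_max|. -/
open Finset

/-- A feasible trip set: a partition of the trip set `V` in which every part is either a
singleton or a 2-element set forming an edge of the shareability network `G`. -/
def IsFeasibleTripSet {V : Type*} [Fintype V] [DecidableEq V] (G : SimpleGraph V)
    (P : Finpartition (univ : Finset V)) : Prop :=
  ∀ p ∈ P.parts, (∃ v : V, p = {v}) ∨ (∃ u v : V, G.Adj u v ∧ p = {u, v})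

/-- A matching of `G`, viewed as a collection of 2-element vertex sets: each member is an
edge of `G`, and the members are pairwise disjoint. -/
def IsGraphMatching {V : Type*} [DecidableEq V] (G : SimpleGraph V)
    (M : Finset (Finset V)) : Prop :=
  (∀ e ∈ M, ∃ u v : V, G.Adj u v ∧ e = {u, v}) ∧ (M : Set (Finset V)).Pairwise Disjoint

/-- Theorem MaxMatching / MNT: if `Mmax` is a maximum matching of the shareability network
`G` on `n` trips, then the minimum number of parts of a feasible trip set is `n - |Mmax|`. -/
theorem min_trips_eq_card_sub_max_matching
    {V : Type*} [Fintype V] [DecidableEq V] (G : SimpleGraph V) (n : ℕ)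
    (hn : Fintype.card V = n)
    (Mmax : Finset (Finset V)) (hMmax : IsGraphMatching G Mmax)
    (hmax : ∀ M : Finset (Finset V), IsGraphMatching G M → M.card ≤ Mmax.card) :
    IsLeast {m : ℕ | ∃ P : Finpartition (univ : Finset V),
        IsFeasibleTripSet G P ∧ P.parts.card = m} (n - Mmax.card) := by
  obtain ⟨hMedge, hMdisj⟩ := hMmax
  have hcard2 : ∀ e ∈ Mmax, e.card = 2 := by
    intro e he
    obtain ⟨u, v, huv, rfl⟩ := hMedge e he
    rw [Finset.card_insert_of_notMem (by simp [huv.ne]), Finset.card_singleton]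
  set covered : Finset V := Mmax.sup id with hcovdef
  have hcovered : covered = Mmax.biUnion id := Finset.sup_eq_biUnion _ _
  have hcovcard : covered.card = 2 * Mmax.card := by
    have h1 : covered.card = ∑ e ∈ Mmax, e.card := by
      rw [hcovered]
      exact Finset.card_biUnion (fun x hx y hy hxy => hMdisj hx hy hxy)
    rw [h1, Finset.sum_congr rfl hcard2, Finset.sum_const, smul_eq_mul, mul_comm]
  set parts : Finset (Finset V) :=
    Mmax ∪ (univ \ covered).image (fun v => ({v} : Finset V)) with hpartsdef
  have hmemparts : ∀ p ∈ parts, p ∈ Mmax ∨ ∃ v, v ∉ covered ∧ p = {v} := by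
    intro p hp
    rcases Finset.mem_union.1 hp with h | h
    · exact Or.inl h
    · obtain ⟨v, hv, rfl⟩ := Finset.mem_image.1 h
      exact Or.inr ⟨v, (Finset.mem_sdiff.1 hv).2, rfl⟩
  have hsubcov : ∀ e ∈ Mmax, e ⊆ covered := fun e he => Finset.le_sup (f := id) he
  have hpd : (parts : Set (Finset V)).PairwiseDisjoint id := by
    intro a ha b hb hab
    rcases hmemparts a ha with h1 | ⟨u, hu, rfl⟩ <;>
      rcases hmemparts b hb with h2 | ⟨v, hv, rfl⟩
    · exact hMdisj h1 h2 hab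
    · exact Finset.disjoint_singleton_right.2 (fun hmem => hv (hsubcov a h1 hmem))
    · exact Finset.disjoint_singleton_left.2 (fun hmem => hu (hsubcov b h2 hmem))
    · exact Finset.disjoint_singleton_left.2 (by simpa using fun h => hab (by rw [h]))
  have hsup : parts.sup id = univ := by
    apply Finset.Subset.antisymm (Finset.subset_univ _)
    intro v _
    rw [Finset.mem_sup]
    by_cases hv : v ∈ covered
    · rw [hcovered] at hv
      obtain ⟨e, he, hve⟩ := Finset.mem_biUnion.1 hv
      exact ⟨e, Finset.mem_union_left _ he, hve⟩
    · exact ⟨{v}, Finset.mem_union_right _ (Finset.mem_image.2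
        ⟨v, Finset.mem_sdiff.2 ⟨Finset.mem_univ v, hv⟩, rfl⟩), Finset.mem_singleton_self v⟩
  have hbot : ⊥ ∉ parts := by
    intro h
    rcases hmemparts _ h with h1 | ⟨v, _, hv⟩
    · have := hcard2 _ h1; simp at this
    · exact absurd hv.symm (Finset.singleton_ne_empty v)
  let P : Finpartition (univ : Finset V) :=
    ⟨parts, (Finset.supIndep_iff_pairwiseDisjoint).2 hpd, hsup, hbot⟩
  have hfeas : IsFeasibleTripSet G P := by
    intro p hp
    rcases hmemparts p hp with h1 | ⟨v, _, rfl⟩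
    · obtain ⟨u, v, huv, rfl⟩ := hMedge p h1
      exact Or.inr ⟨u, v, huv, rfl⟩
    · exact Or.inl ⟨v, rfl⟩
  have hdisju : Disjoint Mmax ((univ \ covered).image (fun v => ({v} : Finset V))) := by
    rw [Finset.disjoint_right]
    intro p hp hpM
    obtain ⟨v, hv, rfl⟩ := Finset.mem_image.1 hp
    exact (Finset.mem_sdiff.1 hv).2 (hsubcov _ hpM (Finset.mem_singleton_self v))
  have himgcard : ((univ \ covered).image (fun v => ({v} : Finset V))).card
      = n - 2 * Mmax.card := by
    rw [Finset.card_image_of_injective _ (fun a b h => Finset.singleton_injective h),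
      Finset.card_sdiff_of_subset (Finset.subset_univ _), Finset.card_univ, hn, hcovcard]
  have hcovle : 2 * Mmax.card ≤ n := by
    rw [← hcovcard, ← hn, ← Finset.card_univ]
    exact Finset.card_le_card (Finset.subset_univ _)
  have hPcard : P.parts.card = n - Mmax.card := by
    show parts.card = n - Mmax.card
    rw [hpartsdef, Finset.card_union_of_disjoint hdisju, himgcard]
    omega
  constructor
  · exact ⟨P, hfeas, hPcard⟩
  · rintro m ⟨Q, hQfeas, rfl⟩
    set T := Q.parts.filter (fun p => p.card = 2) with hT
    have hTmatch : IsGraphMatching G T := by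
      constructor
      · intro e he
        obtain ⟨he1, he2⟩ := Finset.mem_filter.1 he
        rcases hQfeas e he1 with ⟨v, rfl⟩ | h
        · simp at he2
        · exact h
      · intro a ha b hb hab
        exact Q.disjoint (Finset.mem_filter.1 ha).1 (Finset.mem_filter.1 hb).1 hab
    have hTle : T.card ≤ Mmax.card := hmax T hTmatch
    have hsum : ∑ p ∈ Q.parts, p.card = n := by
      rw [Q.sum_card_parts, Finset.card_univ, hn]
    have hsplit : ∑ p ∈ Q.parts, p.card = 2 * T.card + (Q.parts.card - T.card) := by
      rw [← Finset.sum_filter_add_sum_filter_not Q.parts (fun p => p.card = 2)]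
      have h1 : ∑ p ∈ T, p.card = 2 * T.card := by
        rw [Finset.sum_congr rfl (fun p hp => (Finset.mem_filter.1 hp).2),
          Finset.sum_const, smul_eq_mul, mul_comm]
      have h2 : ∑ p ∈ Q.parts.filter (fun p => ¬ p.card = 2), p.card
          = (Q.parts.filter (fun p => ¬ p.card = 2)).card := by
        rw [Finset.card_eq_sum_ones]
        refine Finset.sum_congr rfl (fun p hp => ?_)
        obtain ⟨hp1, hp2⟩ := Finset.mem_filter.1 hp
        rcases hQfeas p hp1 with ⟨v, rfl⟩ | ⟨u, v, huv, rfl⟩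
        · simp
        · exact absurd (by rw [Finset.card_insert_of_notMem (by simp [huv.ne]),
            Finset.card_singleton]) hp2
      rw [h1, h2, hT, Finset.filter_not, Finset.card_sdiff_of_subset (Finset.filter_subset _ _)]
    have hTleQ : T.card ≤ Q.parts.card := Finset.card_le_card (Finset.filter_subset _ _)
    omega
end

section
/- (Theorem MaxWeightMatching / MTTC) Let V be a finite set of trips, G a simple graph on V, c : V → ℝ a cost function on single trips, and ccomb a cost function assigning to each edge {u,v} of G the cost of the combined trip. Weight each edge {u,v} of G by w({u,v}) = c(u) + c(v) − ccomb({u,v}). Define the total cost of a feasible trip set P as the sum of c(v) over all singleton parts {v} of P plus the sum of ccomb(e) over all 2-element parts e of P. Then the minimum total cost over all feasible trip sets equals (∑_{v∈V} c(v)) − W, where W is the maximum, over all matchings M of G, of ∑_{e∈M} w(e). -/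
open Finset

/-- The total cost of a feasible trip set: the sum of `c v` over the singleton parts `{v}`
plus the sum of `ccomb e` over the 2-element parts `e`. -/
def tripSetCost {V : Type*} [Fintype V] [DecidableEq V]
    (c : V → ℝ) (ccomb : Finset V → ℝ) (P : Finpartition (univ : Finset V)) : ℝ :=
  ∑ p ∈ P.parts, if p.card = 1 then ∑ v ∈ p, c v else ccomb p

lemma cost_eq_sub {V : Type*} [Fintype V] [DecidableEq V] (G : SimpleGraph V)
    (c : V → ℝ) (ccomb : Finset V → ℝ) (P : Finpartition (univ : Finset V))
    (hP : IsFeasibleTripSet G P) :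
    tripSetCost c ccomb P = (∑ v : V, c v) -
      ∑ e ∈ P.parts.filter (fun p => p.card ≠ 1), ((∑ v ∈ e, c v) - ccomb e) := by
  have hsum : ∑ p ∈ P.parts, ∑ v ∈ p, c v = ∑ v : V, c v := by
    have h := Finset.sum_biUnion (f := c) (t := id) P.disjoint
    rw [P.biUnion_parts] at h
    exact h.symm
  rw [Finset.sum_filter]
  unfold tripSetCost
  rw [← hsum, ← Finset.sum_sub_distrib]
  apply Finset.sum_congr rfl
  intro p hp
  by_cases h : p.card = 1 <;> simp [h]

/-- Theorem MaxWeightMatching / MTTC: weighting each edge `e = {u,v}` of `G` by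
`w e = c u + c v - ccomb e`, the minimum total travel cost over all feasible trip sets
equals `(∑ v, c v) - W`, where `W` is the maximum total weight of a matching of `G`. -/
theorem min_cost_eq_total_sub_max_weight_matching
    {V : Type*} [Fintype V] [DecidableEq V] (G : SimpleGraph V)
    (c : V → ℝ) (ccomb : Finset V → ℝ) (W : ℝ)
    (hW : IsGreatest {x : ℝ | ∃ M : Finset (Finset V), IsGraphMatching G M ∧
        ∑ e ∈ M, ((∑ v ∈ e, c v) - ccomb e) = x} W) :
    IsLeast {x : ℝ | ∃ P : Finpartition (univ : Finset V),
        IsFeasibleTripSet G P ∧ tripSetCost c ccomb P = x} ((∑ v : V, c v) - W) := by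
  obtain ⟨⟨M, hM, hMW⟩, hub⟩ := hW
  constructor
  · -- achieve the minimum: build partition from the max matching M
    set covered : Finset V := M.biUnion id with hcov
    set S : Finset (Finset V) := (univ \ covered).image (fun v => ({v} : Finset V)) with hS
    have hcard2 : ∀ e ∈ M, e.card = 2 := by
      intro e he
      obtain ⟨u, v, huv, rfl⟩ := hM.1 e he
      rw [Finset.card_insert_of_notMem (by simp [huv.ne]), Finset.card_singleton]
    have hMS : Disjoint M S := by
      rw [Finset.disjoint_left]
      intro e heM heS
      obtain ⟨v, _, rfl⟩ := Finset.mem_image.mp heS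
      have := hcard2 _ heM
      simp at this
    have hpd : ((M ∪ S : Finset (Finset V)) : Set (Finset V)).PairwiseDisjoint id := by
      intro a ha b hb hab
      simp only [Finset.coe_union, Set.mem_union, Finset.mem_coe] at ha hb
      simp only [Function.onFun, id_eq]
      have key : ∀ x ∈ M ∪ S, ∀ v ∈ x, x ∈ S → v ∉ covered := by
        intro x _ v hv hxS
        obtain ⟨w, hw, rfl⟩ := Finset.mem_image.mp hxS
        simp only [Finset.mem_singleton] at hv
        subst hv
        exact (Finset.mem_sdiff.mp hw).2
      rcases ha with ha | ha <;> rcases hb with hb | hb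
      · exact hM.2 ha hb hab
      · obtain ⟨w, hw, rfl⟩ := Finset.mem_image.mp hb
        simp only [Finset.disjoint_singleton_right]
        intro hcon
        exact (Finset.mem_sdiff.mp hw).2 (Finset.mem_biUnion.mpr ⟨a, ha, hcon⟩)
      · obtain ⟨w, hw, rfl⟩ := Finset.mem_image.mp ha
        simp only [Finset.disjoint_singleton_left]
        intro hcon
        exact (Finset.mem_sdiff.mp hw).2 (Finset.mem_biUnion.mpr ⟨b, hb, hcon⟩)
      · obtain ⟨w, hw, rfl⟩ := Finset.mem_image.mp ha
        obtain ⟨w', hw', rfl⟩ := Finset.mem_image.mp hb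
        rw [Finset.disjoint_singleton]
        intro h; exact hab (by rw [h])
    have hsup : (M ∪ S).sup id = (univ : Finset V) := by
      apply Finset.Subset.antisymm
      · exact Finset.subset_univ _
      · intro v _
        rw [Finset.sup_eq_biUnion, Finset.mem_biUnion]
        by_cases hv : v ∈ covered
        · obtain ⟨e, he, hve⟩ := Finset.mem_biUnion.mp hv
          exact ⟨e, Finset.mem_union_left _ he, hve⟩
        · refine ⟨{v}, Finset.mem_union_right _ ?_, Finset.mem_singleton_self v⟩
          exact Finset.mem_image.mpr ⟨v, Finset.mem_sdiff.mpr ⟨Finset.mem_univ v, hv⟩, rfl⟩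
    have hbot : (⊥ : Finset V) ∉ M ∪ S := by
      intro h
      rcases Finset.mem_union.mp h with h | h
      · have := hcard2 _ h; simp at this
      · obtain ⟨w, _, hw⟩ := Finset.mem_image.mp h
        simp only [Finset.bot_eq_empty] at hw
        exact Finset.singleton_ne_empty w hw
    set P : Finpartition (univ : Finset V) :=
      ⟨M ∪ S, Finset.supIndep_iff_pairwiseDisjoint.mpr hpd, hsup, hbot⟩ with hPdef
    have hfeas : IsFeasibleTripSet G P := by
      intro p hp
      rcases Finset.mem_union.mp hp with h | h
      · obtain ⟨u, v, huv, rfl⟩ := hM.1 p h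
        exact Or.inr ⟨u, v, huv, rfl⟩
      · obtain ⟨w, _, rfl⟩ := Finset.mem_image.mp h
        exact Or.inl ⟨w, rfl⟩
    refine ⟨P, hfeas, ?_⟩
    rw [cost_eq_sub G c ccomb P hfeas]
    congr 1
    rw [← hMW]
    apply Finset.sum_congr _ (fun _ _ => rfl)
    show (M ∪ S).filter (fun p => p.card ≠ 1) = M
    rw [Finset.filter_union]
    have h1 : M.filter (fun p => p.card ≠ 1) = M := by
      apply Finset.filter_true_of_mem
      intro e he
      rw [hcard2 e he]; omega
    have h2 : S.filter (fun p => p.card ≠ 1) = ∅ := by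
      apply Finset.filter_false_of_mem
      intro e he
      obtain ⟨w, _, rfl⟩ := Finset.mem_image.mp he
      simp
    rw [h1, h2, Finset.union_empty]
  · -- lower bound
    rintro x ⟨P, hfeas, rfl⟩
    rw [cost_eq_sub G c ccomb P hfeas]
    have hmem : ∑ e ∈ P.parts.filter (fun p => p.card ≠ 1), ((∑ v ∈ e, c v) - ccomb e) ∈
        {x : ℝ | ∃ M : Finset (Finset V), IsGraphMatching G M ∧
          ∑ e ∈ M, ((∑ v ∈ e, c v) - ccomb e) = x} := by
      refine ⟨_, ⟨?_, ?_⟩, rfl⟩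
      · intro e he
        obtain ⟨heP, hec⟩ := Finset.mem_filter.mp he
        rcases hfeas e heP with ⟨v, rfl⟩ | h
        · simp at hec
        · exact h
      · exact Set.Pairwise.mono (Finset.coe_subset.mpr (Finset.filter_subset _ _)) P.disjoint
    linarith [hub hmem]
end

section
/- (Theorem kWeightMatch / kMNT) Let V be a finite set of n trips and 𝓛 a family of subsets of V each of cardinality at least 2; weight each hyper-link L ∈ 𝓛 by w(L) = |L| − 1. Then the minimum, over all feasible trip sets P, of the number of parts of P equals n − W, where W is the maximum, over all matchings M of 𝓛, of ∑_{L∈M} w(L). -/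
open Finset

/-- A feasible trip set for a shareability hyper-network `𝓛`: a partition of the trip set
`V` in which every part is either a singleton or a hyper-link of `𝓛`. -/
def IsFeasibleHyperTripSet {V : Type*} [Fintype V] [DecidableEq V]
    (𝓛 : Finset (Finset V)) (P : Finpartition (univ : Finset V)) : Prop :=
  ∀ p ∈ P.parts, (∃ v : V, p = {v}) ∨ p ∈ 𝓛

/-- A matching of the hyper-network `𝓛`: a subset of `𝓛` whose members are pairwise
disjoint. -/
def IsHyperMatching {V : Type*} (𝓛 M : Finset (Finset V)) : Prop :=
  M ⊆ 𝓛 ∧ (M : Set (Finset V)).Pairwise Disjoint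

lemma aux_sum_card {V : Type*} [DecidableEq V] (T : Finset (Finset V))
    (h : ∀ p ∈ T, p.Nonempty) :
    ∑ p ∈ T, (p.card - 1) + T.card = ∑ p ∈ T, p.card := by
  calc ∑ p ∈ T, (p.card - 1) + T.card = ∑ p ∈ T, ((p.card - 1) + 1) := by
        rw [Finset.sum_add_distrib, Finset.sum_const, smul_eq_mul, mul_one]
    _ = ∑ p ∈ T, p.card := Finset.sum_congr rfl fun p hp =>
        Nat.sub_add_cancel (Finset.card_pos.mpr (h p hp))

/-- Theorem kWeightMatch / kMNT: weighting each hyper-link `L ∈ 𝓛` by `w L = |L| - 1`, the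
minimum number of parts of a feasible trip set on `n` trips equals `n - W`, where `W` is
the maximum total weight of a matching of `𝓛`. -/
theorem min_trips_eq_card_sub_max_weight_hypermatching
    {V : Type*} [Fintype V] [DecidableEq V] (𝓛 : Finset (Finset V)) (n : ℕ)
    (hn : Fintype.card V = n) (h𝓛 : ∀ L ∈ 𝓛, 2 ≤ L.card) (W : ℕ)
    (hW : IsGreatest {s : ℕ | ∃ M : Finset (Finset V), IsHyperMatching 𝓛 M ∧
        ∑ L ∈ M, (L.card - 1) = s} W) :
    IsLeast {m : ℕ | ∃ P : Finpartition (univ : Finset V),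
        IsFeasibleHyperTripSet 𝓛 P ∧ P.parts.card = m} (n - W) := by
  have hn' : (univ : Finset V).card = n := by simpa using hn
  constructor
  · -- membership
    obtain ⟨M, ⟨hM𝓛, hMdisj⟩, hMW⟩ := hW.1
    set S : Finset V := M.sup id with hS
    have hScard : S.card = ∑ L ∈ M, L.card := by
      rw [hS, Finset.sup_eq_biUnion]
      exact Finset.card_biUnion fun x hx y hy hxy => hMdisj hx hy hxy
    have hSle : S.card ≤ n := hn' ▸ Finset.card_le_card (Finset.subset_univ S)
    set Q : Finset (Finset V) := M ∪ (univ \ S).image (fun v => ({v} : Finset V)) with hQ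
    have hMnotsing : ∀ v : V, ({v} : Finset V) ∉ M := by
      intro v hv
      have := h𝓛 _ (hM𝓛 hv)
      simp at this
    have hdisjQ : Disjoint M ((univ \ S).image (fun v => ({v} : Finset V))) := by
      rw [Finset.disjoint_left]
      intro a ha hb
      obtain ⟨v, -, rfl⟩ := Finset.mem_image.mp hb
      exact hMnotsing v ha
    have hmemS : ∀ a : V, a ∈ S ↔ ∃ L ∈ M, a ∈ L := by
      intro a; simp [hS, Finset.mem_sup]
    have hsupQ : Q.sup id = univ := by
      ext a
      simp only [hQ, Finset.sup_union, Finset.sup_eq_union, Finset.mem_union, Finset.mem_univ, iff_true]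
      by_cases h : a ∈ S
      · exact Or.inl h
      · refine Or.inr ?_
        rw [Finset.mem_sup]
        exact ⟨{a}, Finset.mem_image.mpr ⟨a, Finset.mem_sdiff.mpr ⟨Finset.mem_univ a, h⟩, rfl⟩,
          Finset.mem_singleton_self a⟩
    have hpwd : (Q : Set (Finset V)).PairwiseDisjoint id := by
      intro x hx y hy hxy
      simp only [hQ, Finset.coe_union, Set.mem_union, Finset.mem_coe, Finset.coe_image,
        Set.mem_image, Finset.mem_coe] at hx hy
      rcases hx with hx | ⟨v, hv, rfl⟩ <;> rcases hy with hy | ⟨w, hw, rfl⟩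
      · exact hMdisj hx hy hxy
      · show Disjoint x {w}
        rw [Finset.disjoint_singleton_right]
        intro hcon
        exact (Finset.mem_sdiff.mp hw).2 ((hmemS w).mpr ⟨x, hx, hcon⟩)
      · show Disjoint ({v} : Finset V) y
        rw [Finset.disjoint_singleton_left]
        intro hcon
        exact (Finset.mem_sdiff.mp hv).2 ((hmemS v).mpr ⟨y, hy, hcon⟩)
      · show Disjoint ({v} : Finset V) {w}
        rw [Finset.disjoint_singleton_left, Finset.mem_singleton]
        intro hcon
        exact hxy (by rw [hcon])
    have hbot : (⊥ : Finset V) ∉ Q := by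
      simp only [hQ, Finset.mem_union, Finset.mem_image]
      rintro (h | ⟨v, -, hv⟩)
      · have := h𝓛 _ (hM𝓛 h); simp [Finset.bot_eq_empty] at this
      · simp at hv
    set P : Finpartition (univ : Finset V) :=
      ⟨Q, Finset.supIndep_iff_pairwiseDisjoint.mpr hpwd, hsupQ, hbot⟩ with hP
    have hQcard : Q.card = M.card + (n - S.card) := by
      rw [hQ, Finset.card_union_of_disjoint hdisjQ,
        Finset.card_image_of_injective _ Finset.singleton_injective,
        Finset.card_sdiff_of_subset (Finset.subset_univ S), hn']
    have hWM : W + M.card = S.card := by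
      rw [hScard, ← hMW]
      exact aux_sum_card M fun p hp => Finset.card_pos.mp
        (lt_of_lt_of_le (by norm_num) (h𝓛 _ (hM𝓛 hp)))
    refine ⟨P, ?_, ?_⟩
    · intro p hp
      simp only [hP, hQ, Finset.mem_union, Finset.mem_image] at hp
      rcases hp with h | ⟨v, -, rfl⟩
      · exact Or.inr (hM𝓛 h)
      · exact Or.inl ⟨v, rfl⟩
    · show Q.card = n - W
      omega
  · -- lower bound
    rintro m ⟨P, hfeas, rfl⟩
    classical
    set M : Finset (Finset V) := P.parts.filter (· ∈ 𝓛) with hM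
    have hmatch : IsHyperMatching 𝓛 M := by
      constructor
      · intro L hL; exact (Finset.mem_filter.mp hL).2
      · exact fun x hx y hy hxy => P.supIndep.pairwiseDisjoint
          (Finset.mem_of_mem_filter _ hx) (Finset.mem_of_mem_filter _ hy) hxy
    have hle : ∑ L ∈ M, (L.card - 1) ≤ W := hW.2 ⟨M, hmatch, rfl⟩
    have hsum : ∑ p ∈ P.parts, (p.card - 1) = ∑ L ∈ M, (L.card - 1) := by
      rw [← Finset.sum_filter_add_sum_filter_not P.parts (· ∈ 𝓛), ← hM]
      have : ∑ p ∈ P.parts.filter (fun p => ¬ p ∈ 𝓛), (p.card - 1) = 0 := by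
        refine Finset.sum_eq_zero fun p hp => ?_
        obtain ⟨hp1, hp2⟩ := Finset.mem_filter.mp hp
        rcases hfeas p hp1 with ⟨v, rfl⟩ | h
        · simp
        · exact absurd h hp2
      omega
    have htot : ∑ p ∈ P.parts, (p.card - 1) + P.parts.card = n := by
      rw [aux_sum_card P.parts fun p hp => P.nonempty_of_mem_parts hp,
        P.sum_card_parts, hn']
    omega
end

section
/- (kMTTC theorem) Let V be a finite set of trips, 𝓛 a family of subsets of V each of cardinality at least 2, c : V → ℝ a cost function on single trips, and ccomb a cost function on the hyper-links in 𝓛. Weight each L ∈ 𝓛 by w^c(L) = (∑_{v∈L} c(v)) − ccomb(L). Define the total cost of a feasible trip set P as the sum of c(v) over singleton parts {v} of P plus the sum of ccomb(L) over non-singleton parts L of P. Then the minimum total cost over all feasible trip sets equals (∑_{v∈V} c(v)) − W, where W is the maximum, over all matchings M of 𝓛, of ∑_{L∈M} w^c(L). -/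
open Finset

/-- The total cost of a feasible trip set: the sum of `c v` over the singleton parts `{v}`
plus the sum of `ccomb L` over the non-singleton parts `L`. -/
def hyperTripSetCost {V : Type*} [Fintype V] [DecidableEq V]
    (c : V → ℝ) (ccomb : Finset V → ℝ) (P : Finpartition (univ : Finset V)) : ℝ :=
  ∑ p ∈ P.parts, if p.card = 1 then ∑ v ∈ p, c v else ccomb p

/-- Key identity: the cost of any partition equals the total single cost minus the weight
of the family of its non-singleton parts. -/
lemma cost_eq_total_sub_weight {V : Type*} [Fintype V] [DecidableEq V]
    (c : V → ℝ) (ccomb : Finset V → ℝ) (P : Finpartition (univ : Finset V)) :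
    hyperTripSetCost c ccomb P = (∑ v : V, c v) -
      ∑ L ∈ P.parts.filter (fun p => ¬ p.card = 1), ((∑ v ∈ L, c v) - ccomb L) := by
  have hsum : ∑ v : V, c v = ∑ p ∈ P.parts, ∑ v ∈ p, c v := by
    conv_lhs => rw [show (univ : Finset V) = P.parts.biUnion id from P.biUnion_parts.symm]
    exact Finset.sum_biUnion (Finset.supIndep_iff_pairwiseDisjoint.mp P.supIndep)
  rw [hsum, ← Finset.sum_filter_add_sum_filter_not P.parts (fun p => p.card = 1)]
  unfold hyperTripSetCost
  rw [← Finset.sum_filter_add_sum_filter_not P.parts (fun p => p.card = 1)]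
  rw [Finset.sum_congr rfl (fun p hp => if_pos (Finset.mem_filter.mp hp).2),
      Finset.sum_congr rfl (fun p hp => if_neg (Finset.mem_filter.mp hp).2)]
  rw [Finset.sum_sub_distrib]
  ring

/-- The partition associated to a matching: the matched hyper-links, plus singletons. -/
def matchingPartition {V : Type*} [Fintype V] [DecidableEq V]
    (M : Finset (Finset V)) (h2 : ∀ L ∈ M, 2 ≤ L.card)
    (hdisj : (M : Set (Finset V)).Pairwise Disjoint) :
    Finpartition (univ : Finset V) where
  parts := M ∪ (univ \ M.sup id).image (fun v => {v})
  supIndep := by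
    rw [Finset.supIndep_iff_pairwiseDisjoint]
    intro a ha b hb hab
    simp only [Function.onFun, id_eq]
    simp only [Finset.coe_union, Set.mem_union, Finset.mem_coe, Finset.mem_union,
      Finset.coe_image, Set.mem_image, Finset.mem_coe, Finset.mem_sdiff] at ha hb
    rcases ha with ha | ⟨v, hv, rfl⟩
    · rcases hb with hb | ⟨w, hw, rfl⟩
      · exact hdisj ha hb hab
      · rw [Finset.disjoint_singleton_right]
        intro hwa
        refine hw.2 ?_
        rw [Finset.mem_sup]; exact ⟨a, ha, hwa⟩
    · rcases hb with hb | ⟨w, hw, rfl⟩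
      · rw [Finset.disjoint_singleton_left]
        intro hvb
        refine hv.2 ?_
        rw [Finset.mem_sup]; exact ⟨b, hb, hvb⟩
      · rw [Finset.disjoint_singleton_right, Finset.mem_singleton]
        intro h; exact hab (by rw [h])
  sup_parts := by
    apply Finset.Subset.antisymm (Finset.subset_univ _)
    intro v _
    rw [Finset.mem_sup]
    by_cases hv : v ∈ M.sup id
    · obtain ⟨L, hL, hvL⟩ := Finset.mem_sup.mp hv
      exact ⟨L, Finset.mem_union_left _ hL, hvL⟩
    · refine ⟨{v}, Finset.mem_union_right _ ?_, Finset.mem_singleton_self v⟩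
      exact Finset.mem_image.mpr ⟨v, Finset.mem_sdiff.mpr ⟨Finset.mem_univ v, hv⟩, rfl⟩
  bot_notMem := by
    intro h
    rcases Finset.mem_union.mp h with h | h
    · have := h2 _ h
      simp at this
    · obtain ⟨v, _, hv⟩ := Finset.mem_image.mp h
      simp at hv

lemma matchingPartition_filter {V : Type*} [Fintype V] [DecidableEq V]
    (M : Finset (Finset V)) (h2 : ∀ L ∈ M, 2 ≤ L.card)
    (hdisj : (M : Set (Finset V)).Pairwise Disjoint) :
    (matchingPartition M h2 hdisj).parts.filter (fun p => ¬ p.card = 1) = M := by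
  show (M ∪ (univ \ M.sup id).image (fun v => {v})).filter (fun p => ¬ p.card = 1) = M
  rw [Finset.filter_union]
  rw [Finset.filter_true_of_mem (fun L hL => by have := h2 L hL; omega)]
  rw [Finset.filter_false_of_mem, Finset.union_empty]
  intro p hp
  obtain ⟨v, _, rfl⟩ := Finset.mem_image.mp hp
  simp

/-- kMTTC theorem: weighting each hyper-link `L ∈ 𝓛` by
`w^c L = (∑_{v ∈ L} c v) - ccomb L`, the minimum total travel cost over all feasible trip
sets equals `(∑ v, c v) - W`, where `W` is the maximum total weight of a matching of `𝓛`. -/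
theorem min_cost_eq_total_sub_max_weight_hypermatching
    {V : Type*} [Fintype V] [DecidableEq V] (𝓛 : Finset (Finset V))
    (h𝓛 : ∀ L ∈ 𝓛, 2 ≤ L.card)
    (c : V → ℝ) (ccomb : Finset V → ℝ) (W : ℝ)
    (hW : IsGreatest {x : ℝ | ∃ M : Finset (Finset V), IsHyperMatching 𝓛 M ∧
        ∑ L ∈ M, ((∑ v ∈ L, c v) - ccomb L) = x} W) :
    IsLeast {x : ℝ | ∃ P : Finpartition (univ : Finset V),
        IsFeasibleHyperTripSet 𝓛 P ∧ hyperTripSetCost c ccomb P = x}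
      ((∑ v : V, c v) - W) := by
  obtain ⟨⟨M, ⟨hM𝓛, hMdisj⟩, hMW⟩, hWub⟩ := hW
  constructor
  · -- membership: build the partition from the optimal matching
    have h2 : ∀ L ∈ M, 2 ≤ L.card := fun L hL => h𝓛 L (hM𝓛 hL)
    refine ⟨matchingPartition M h2 hMdisj, ?_, ?_⟩
    · intro p hp
      rcases Finset.mem_union.mp hp with h | h
      · exact Or.inr (hM𝓛 h)
      · obtain ⟨v, _, rfl⟩ := Finset.mem_image.mp h
        exact Or.inl ⟨v, rfl⟩
    · rw [cost_eq_total_sub_weight, matchingPartition_filter, hMW]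
  · -- lower bound
    rintro x ⟨P, hPfeas, rfl⟩
    rw [cost_eq_total_sub_weight]
    have hmatch : IsHyperMatching 𝓛 (P.parts.filter (fun p => ¬ p.card = 1)) := by
      constructor
      · intro p hp
        obtain ⟨hpP, hp1⟩ := Finset.mem_filter.mp hp
        rcases hPfeas p hpP with ⟨v, rfl⟩ | h
        · simp at hp1
        · exact h
      · intro a ha b hb hab
        exact Finset.supIndep_iff_pairwiseDisjoint.mp P.supIndep
          (Finset.mem_coe.mpr (Finset.filter_subset _ _ (Finset.mem_coe.mp ha)))
          (Finset.mem_coe.mpr (Finset.filter_subset _ _ (Finset.mem_coe.mp hb))) hab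
    have := hWub ⟨_, hmatch, rfl⟩
    linarith
end

section
/- (Greedy k-approximation) Let V be a finite set, k a positive integer, 𝓛 a family of nonempty subsets of V each of cardinality at most k, and w : 𝓛 → ℝ a nonnegative weight function. Suppose M is a matching of 𝓛 (its members pairwise disjoint) with the greedy domination property: every L ∈ 𝓛 intersects some F ∈ M with w(F) ≥ w(L). Then for every matching M' of 𝓛 one has ∑_{L∈M'} w(L) ≤ k · ∑_{F∈M} w(F); in particular the greedy matching is within a factor k of the maximum weighted matching. -/
open Finset

/-- Greedy k-approximation: if `𝓛` is a family of nonempty subsets of `V` of cardinality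
at most `k` with nonnegative weights, and `M` is a matching of `𝓛` with the greedy
domination property (every hyper-link of `𝓛` intersects some member of `M` of at least
its weight), then every matching `M'` of `𝓛` satisfies
`∑_{L ∈ M'} w L ≤ k * ∑_{F ∈ M} w F`. -/
theorem greedy_hypermatching_k_approximation
    {V : Type*} [Fintype V] [DecidableEq V] (k : ℕ) (hk : 1 ≤ k)
    (𝓛 : Finset (Finset V))
    (h𝓛 : ∀ L ∈ 𝓛, L.Nonempty ∧ L.card ≤ k)
    (w : Finset V → ℝ) (hw : ∀ L ∈ 𝓛, 0 ≤ w L)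
    (M : Finset (Finset V)) (hM : IsHyperMatching 𝓛 M)
    (hgreedy : ∀ L ∈ 𝓛, ∃ F ∈ M, (L ∩ F).Nonempty ∧ w L ≤ w F)
    (M' : Finset (Finset V)) (hM' : IsHyperMatching 𝓛 M') :
    ∑ L ∈ M', w L ≤ (k : ℝ) * ∑ F ∈ M, w F := by
  classical
  -- choose for each L the dominating F
  have hsel : ∀ L ∈ M', ∃ F ∈ M, (L ∩ F).Nonempty ∧ w L ≤ w F := fun L hL =>
    hgreedy L (hM'.1 hL)
  choose! f hfM hfint hfw using hsel
  -- Step 1: ∑ w L ≤ ∑ w (f L)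
  have step1 : ∑ L ∈ M', w L ≤ ∑ L ∈ M', w (f L) :=
    Finset.sum_le_sum fun L hL => hfw L hL
  -- Step 2: fiberwise
  have step2 : ∑ L ∈ M', w (f L) =
      ∑ F ∈ M, ∑ L ∈ M'.filter (fun L => f L = F), w (f L) :=
    (Finset.sum_fiberwise_of_maps_to (fun L hL => hfM L hL) _).symm
  rw [Finset.mul_sum]
  refine le_trans step1 (step2 ▸ Finset.sum_le_sum fun F hF => ?_)
  have hwF : 0 ≤ w F := hw F (hM.1 hF)
  have hsum : ∑ L ∈ M'.filter (fun L => f L = F), w (f L)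
      = (M'.filter (fun L => f L = F)).card * w F := by
    rw [Finset.sum_congr rfl fun L hL => by
      rw [(Finset.mem_filter.1 hL).2], Finset.sum_const, nsmul_eq_mul]
  rw [hsum]
  have hcard : (M'.filter (fun L => f L = F)).card ≤ k := by
    -- map each L in the fiber to a point of L ∩ F
    have hpt : ∀ L ∈ M'.filter (fun L => f L = F), ∃ x, x ∈ L ∩ F := by
      intro L hL
      obtain ⟨hL', hfL⟩ := Finset.mem_filter.1 hL
      obtain ⟨x, hx⟩ := hfint L hL'
      exact ⟨x, hfL ▸ hx⟩
    have : Nonempty V := ⟨(h𝓛 F (hM.1 hF)).1.choose⟩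
    choose! g hg using hpt
    have hinj : ∀ L₁ ∈ M'.filter (fun L => f L = F),
        ∀ L₂ ∈ M'.filter (fun L => f L = F), g L₁ = g L₂ → L₁ = L₂ := by
      intro L₁ h₁ L₂ h₂ heq
      by_contra hne
      have d := hM'.2 (Finset.mem_coe.2 (Finset.mem_filter.1 h₁).1)
        (Finset.mem_coe.2 (Finset.mem_filter.1 h₂).1) hne
      have hx₁ : g L₁ ∈ L₁ := (Finset.mem_inter.1 (hg L₁ h₁)).1
      have hx₂ : g L₂ ∈ L₂ := (Finset.mem_inter.1 (hg L₂ h₂)).1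
      exact (Finset.disjoint_left.1 d hx₁) (heq ▸ hx₂)
    have := Finset.card_le_card_of_injOn g
      (fun L hL => (Finset.mem_inter.1 (hg L hL)).2) hinj
    exact this.trans (h𝓛 F (hM.1 hF)).2
  calc ((M'.filter (fun L => f L = F)).card : ℝ) * w F
      ≤ (k : ℝ) * w F := by
        exact mul_le_mul_of_nonneg_right (by exact_mod_cast hcard) hwF
end
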